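/- Let E be a complete real inner product space and let f : E → ℝ be 1-Lipschitz. Suppose x, y ∈ E with x ≠ y satisfy f(y) - f(x) = ‖x - y‖, and suppose f is differentiable at x. Then there exists t ≤ 0 such that y = x - t • ∇f(x), where ∇f(x) denotes the gradient of f at x; indeed t = -‖x - y‖ works. -/

import Mathlib

/-- Proposition 1 (transportation plan direction, `t ≤ 0` case): if
`f y - f x = ‖x - y‖` for a 1-Lipschitz `f` differentiable at `x`, then `y`
lies in the direction `∇f(x)` from `x`, at parameter `t = -‖x - y‖ ≤ 0`. -/
theorem otnn_transport_direction_neg {E : Type*} [NormedAddCommGroup E]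
    [InnerProductSpace ℝ E] [CompleteSpace E]
    (f : E → ℝ) (hf : LipschitzWith 1 f) (x y : E) (hne : x ≠ y)
    (hxy : f y - f x = ‖x - y‖) (hdiff : DifferentiableAt ℝ f x) :
    ∃ t : ℝ, t ≤ 0 ∧ t = -‖x - y‖ ∧ y = x - t • gradient f x := by
  set r : ℝ := ‖x - y‖ with hr
  have hr0 : 0 < r := by rw [hr, norm_sub_pos_iff]; exact hne
  set u : E := r⁻¹ • (y - x) with hu
  have hru : r • u = y - x := by
    rw [hu, smul_smul, mul_inv_cancel₀ hr0.ne', one_smul]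
  have hnu : ‖u‖ = 1 := by
    have : ‖y - x‖ = r := by rw [hr, norm_sub_rev]
    rw [hu, norm_smul, this, norm_inv, Real.norm_eq_abs, abs_of_pos hr0,
      inv_mul_cancel₀ hr0.ne']
  -- f is affine along the segment
  have key : ∀ s : ℝ, s ∈ Set.Icc 0 r → f (x + s • u) = f x + s := by
    intro s hs
    have h1 : f (x + s • u) - f x ≤ s := by
      calc f (x + s • u) - f x ≤ ‖(x + s • u) - x‖ :=
            le_trans (le_abs_self _) (by simpa [dist_eq_norm] using hf.dist_le_mul (x + s • u) x)
        _ = s := by simp [norm_smul, hnu, abs_of_nonneg hs.1]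
    have h2 : f y - f (x + s • u) ≤ r - s := by
      have he : y - (x + s • u) = (r - s) • u := by
        rw [sub_smul, hru]; abel
      calc f y - f (x + s • u) ≤ ‖y - (x + s • u)‖ :=
            le_trans (le_abs_self _) (by simpa [dist_eq_norm] using hf.dist_le_mul y (x + s • u))
        _ = r - s := by rw [he]; simp [norm_smul, hnu, abs_of_nonneg (sub_nonneg.2 hs.2)]
    linarith
  -- directional derivative along u equals 1
  have hcomp : HasDerivAt (fun s : ℝ => f (x + s • u)) (fderiv ℝ f x u) 0 := by
    have hg : HasDerivAt (fun s : ℝ => x + s • u) u 0 := by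
      simpa using ((hasDerivAt_id (0:ℝ)).smul_const u).const_add x
    have hfd : HasFDerivAt f (fderiv ℝ f x) (x + (0:ℝ) • u) := by
      simpa using hdiff.hasFDerivAt
    exact hfd.comp_hasDerivAt 0 hg
  have h1' : HasDerivWithinAt (fun s : ℝ => f (x + s • u)) (fderiv ℝ f x u)
      (Set.Icc 0 r) 0 := hcomp.hasDerivWithinAt
  have h2' : HasDerivWithinAt (fun s : ℝ => f (x + s • u)) 1 (Set.Icc 0 r) 0 := by
    have hlin : HasDerivWithinAt (fun s : ℝ => f x + s) 1 (Set.Icc 0 r) 0 :=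
      ((hasDerivAt_id (0:ℝ)).const_add (f x)).hasDerivWithinAt
    exact hlin.congr key (key 0 ⟨le_refl 0, hr0.le⟩)
  have hmem : (0:ℝ) ∈ Set.Icc 0 r := ⟨le_refl 0, hr0.le⟩
  have hder : fderiv ℝ f x u = 1 :=
    (uniqueDiffOn_Icc hr0 0 hmem).eq_deriv _ h1' h2'
  -- gradient facts
  have hginner : (inner ℝ (gradient f x) u : ℝ) = 1 := by
    rw [gradient, InnerProductSpace.toDual_symm_apply, hder]
  have hgnorm : ‖gradient f x‖ ≤ 1 := by
    have h1 : ‖fderiv ℝ f x‖ ≤ 1 := by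
      simpa using hdiff.hasFDerivAt.le_of_lipschitz hf
    calc ‖gradient f x‖ = ‖fderiv ℝ f x‖ :=
          (InnerProductSpace.toDual ℝ E).symm.norm_map _
      _ ≤ 1 := h1
  have hgnorm1 : ‖gradient f x‖ = 1 := by
    have hle : (1:ℝ) ≤ ‖gradient f x‖ * ‖u‖ := hginner ▸ real_inner_le_norm _ _
    rw [hnu, mul_one] at hle
    linarith
  have hgu : gradient f x = u :=
    (inner_eq_one_iff_of_norm_eq_one hgnorm1 hnu).mp hginner
  refine ⟨-r, by linarith, rfl, ?_⟩
  rw [hgu, neg_smul, sub_neg_eq_add, hru]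
  abel
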